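/- Let n ≥ 1 and let E ⊆ 𝔻ⁿ be a discrete set that is separated. Then the critical exponent satisfies δ(E) ≤ n − 1; equivalently, the accumulation series S_E(s) = Σ_{x ∈ E} (1 − |x|)^s converges for every s > n − 1. -/
import Mathlib


open Metric Set Filter MeasureTheory
open scoped ENNReal NNReal

noncomputable section

/-- Points of `ℝⁿ` (Euclidean space). -/
abbrev Pt (n : ℕ) := EuclideanSpace ℝ (Fin n)

/-- `E` is a discrete set: every point of `E` is isolated in `E`. -/
def IsDiscreteSet {n : ℕ} (E : Set (Pt n)) : Prop :=
  ∀ x ∈ E, ∃ r > 0, closedBall x r ∩ E = {x}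

/-- The limit set `L(E) = cl(E) \ E`. -/
def limitSet {n : ℕ} (E : Set (Pt n)) : Set (Pt n) := closure E \ E

/-- `E ⊆ 𝔻ⁿ` is separated. -/
def SeparatedSet {n : ℕ} (E : Set (Pt n)) : Prop :=
  ∃ c₁ : ℝ, 0 < c₁ ∧ c₁ < 1 ∧ ∀ x ∈ E, closedBall x (c₁ * (1 - ‖x‖)) ∩ E = {x}

/-- `E ⊆ 𝔻ⁿ` is well-approximated. -/
def WellApproximated {n : ℕ} (E : Set (Pt n)) : Prop :=
  ∃ c₂ : ℝ, 1 ≤ c₂ ∧ ∀ x ∈ E, ∃ z ∈ limitSet E, dist x z ≤ c₂ * (1 - ‖x‖)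

/-- `E` is `α`-separated. -/
def AlphaSeparated {n : ℕ} (E : Set (Pt n)) (α : ℝ) : Prop :=
  ∃ c₁ : ℝ, 0 < c₁ ∧ ∀ x ∈ E, closedBall x (c₁ * (1 - ‖x‖) ^ α) ∩ E = {x}

/-- `E` is `β`-well-approximated. -/
def BetaWellApproximated {n : ℕ} (E : Set (Pt n)) (β : ℝ) : Prop :=
  ∃ c₂ : ℝ, 1 ≤ c₂ ∧ ∀ x ∈ E, ∃ z ∈ limitSet E, dist x z ≤ c₂ * (1 - ‖x‖) ^ β

/-- The accumulation series `S_E(s) = ∑_{x ∈ E} (1 - |x|)^s` (valued in `ℝ≥0∞`). -/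
def accSeries {n : ℕ} (E : Set (Pt n)) (s : ℝ) : ℝ≥0∞ :=
  ∑' x : E, ENNReal.ofReal ((1 - ‖(x : Pt n)‖) ^ s)

/-- The critical exponent `δ(E) = inf { s ≥ 0 : S_E(s) < ∞ }`, with `inf ∅ = ∞`. -/
def critExp {n : ℕ} (E : Set (Pt n)) : ℝ≥0∞ :=
  ⨅ (s : ℝ≥0) (_ : accSeries E (s : ℝ) < ⊤), (s : ℝ≥0∞)

/-- The set of `c`-radial limit points of `E`. -/
def radialPoints {n : ℕ} (E : Set (Pt n)) (c : ℝ) : Set (Pt n) :=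
  {z | ‖z‖ = 1 ∧ ∀ r > 0, ∃ x ∈ E,
    dist x z ≤ c * (1 - ‖x‖) ∧ c * (1 - ‖x‖) ≤ c * r}

/-- The radial limit set `L_rad(E) = ⋃_{c ≥ 1} L_c(E)`. -/
def radialLimitSet {n : ℕ} (E : Set (Pt n)) : Set (Pt n) :=
  ⋃ c ∈ Ici (1 : ℝ), radialPoints E c

/-- The set of `(γ, c)`-radial limit points of `E`. -/
def gammaRadialPoints {n : ℕ} (E : Set (Pt n)) (γ c : ℝ) : Set (Pt n) :=
  {z | z ∈ limitSet E ∧ ∀ r > 0, ∃ x ∈ E,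
    dist x z ≤ c * (1 - ‖x‖) ^ γ ∧ c * (1 - ‖x‖) ^ γ ≤ c * r ^ γ}

/-- The `γ`-radial limit set `L_rad^γ(E) = ⋃_{c ≥ 1} L_c^γ(E)`. -/
def gammaRadialLimitSet {n : ℕ} (E : Set (Pt n)) (γ : ℝ) : Set (Pt n) :=
  ⋃ c ∈ Ici (1 : ℝ), gammaRadialPoints E γ c

/-- The packing number `N_δ(F)`: the maximal cardinality of a packing of `F` by
pairwise disjoint closed balls of radius `δ` centred in `F`. -/
def packingNumber {n : ℕ} (F : Set (Pt n)) (δ : ℝ) : ℕ∞ :=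
  ⨆ (Z : Finset (Pt n)) (_ : ↑Z ⊆ F)
    (_ : (Z : Set (Pt n)).PairwiseDisjoint fun x => closedBall x δ), (Z.card : ℕ∞)

/-- The upper box dimension `limsup_{δ → 0⁺} log N_δ(F) / (-log δ)`. -/
def upperBoxDim {n : ℕ} (F : Set (Pt n)) : ℝ≥0∞ :=
  limsup (fun δ : ℝ =>
    ENNReal.ofReal (Real.log ((packingNumber F δ).toNat : ℝ) / (-Real.log δ)))
    (nhdsWithin 0 (Ioi 0))

/-- The lower box dimension `liminf_{δ → 0⁺} log N_δ(F) / (-log δ)`. -/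
def lowerBoxDim {n : ℕ} (F : Set (Pt n)) : ℝ≥0∞ :=
  liminf (fun δ : ℝ =>
    ENNReal.ofReal (Real.log ((packingNumber F δ).toNat : ℝ) / (-Real.log δ)))
    (nhdsWithin 0 (Ioi 0))

section Aux

open MeasureTheory

lemma pow_sub_pow_le_real {a b : ℝ} (hb : 0 ≤ b) (hba : b ≤ a) (ha : a ≤ 1) (n : ℕ) :
    a ^ n - b ^ n ≤ n * (a - b) := by
  induction n with
  | zero => simp
  | succ n ih =>
    have h0 : 0 ≤ a ^ n - b ^ n := sub_nonneg.2 (pow_le_pow_left₀ hb hba n)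
    have h1 : b ^ n ≤ 1 := pow_le_one₀ hb (hba.trans ha)
    have ha0 : 0 ≤ a := hb.trans hba
    have key : a ^ (n + 1) - b ^ (n + 1) = a * (a ^ n - b ^ n) + (a - b) * b ^ n := by ring
    have h2 : a * (a ^ n - b ^ n) ≤ a ^ n - b ^ n := by nlinarith
    have h3 : (a - b) * b ^ n ≤ a - b := by nlinarith [pow_nonneg hb n]
    push_cast
    nlinarith

lemma euclidean_nontrivial {n : ℕ} (hn : 1 ≤ n) : Nontrivial (Pt n) := by
  haveI : NeZero n := ⟨by omega⟩
  infer_instance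

lemma annulus_volume_le {n : ℕ} (hn : 1 ≤ n) {a b : ℝ} (hb : 0 ≤ b) (hba : b ≤ a)
    (ha : a ≤ 1) :
    volume (closedBall (0 : Pt n) a \ ball 0 b) ≤
      ENNReal.ofReal ((n : ℝ) * (a - b)) * volume (ball (0 : Pt n) 1) := by
  haveI := euclidean_nontrivial hn
  have hVlt : volume (ball (0 : Pt n) 1) ≠ ⊤ := measure_ball_lt_top.ne
  have hcb : volume (closedBall (0 : Pt n) a) =
      ENNReal.ofReal (a ^ n) * volume (ball (0 : Pt n) 1) := by
    rw [Measure.addHaar_closedBall _ _ (hb.trans hba), finrank_euclideanSpace_fin]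
  have hball : volume (ball (0 : Pt n) b) =
      ENNReal.ofReal (b ^ n) * volume (ball (0 : Pt n) 1) := by
    rw [Measure.addHaar_ball _ _ hb, finrank_euclideanSpace_fin]
  have hsub : ball (0 : Pt n) b ⊆ closedBall (0 : Pt n) a :=
    ball_subset_closedBall.trans (closedBall_subset_closedBall hba)
  rw [measure_diff hsub measurableSet_ball.nullMeasurableSet
      (by rw [hball]; exact ENNReal.mul_ne_top ENNReal.ofReal_ne_top hVlt), hcb, hball]
  rw [tsub_le_iff_right, ← add_mul, ← ENNReal.ofReal_add
      (mul_nonneg (Nat.cast_nonneg n) (by linarith)) (pow_nonneg hb n)]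
  gcongr
  nlinarith [pow_sub_pow_le_real hb hba ha n]

lemma lintegral_rim_fin {n : ℕ} (hn : 1 ≤ n) {t : ℝ} (ht0 : 0 < t) (ht1 : t < 1) :
    ∫⁻ z in ball (0 : Pt n) 1, ENNReal.ofReal ((1 - ‖z‖) ^ (-t)) < ⊤ := by
  set V := volume (ball (0 : Pt n) 1) with hV
  have hVlt : V ≠ ⊤ := measure_ball_lt_top.ne
  set A : ℕ → Set (Pt n) :=
    fun k => ball (0 : Pt n) (1 - (1 / 2 : ℝ) ^ (k + 1)) \ ball 0 (1 - (1 / 2 : ℝ) ^ k)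
    with hA
  have hcover : ball (0 : Pt n) 1 ⊆ ⋃ k, A k := by
    intro z hz
    rw [mem_ball_zero_iff] at hz
    have hd0 : 0 < 1 - ‖z‖ := by linarith
    have hex : ∃ k : ℕ, (1 / 2 : ℝ) ^ (k + 1) < 1 - ‖z‖ := by
      obtain ⟨k, hk⟩ := exists_pow_lt_of_lt_one hd0 (by norm_num : (1 / 2 : ℝ) < 1)
      refine ⟨k, lt_of_le_of_lt ?_ hk⟩
      exact pow_le_pow_of_le_one (by norm_num) (by norm_num) (by omega)
    refine mem_iUnion.2 ⟨Nat.find hex, ⟨?_, ?_⟩⟩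
    · rw [mem_ball_zero_iff]
      have := Nat.find_spec hex
      linarith
    · simp only [mem_ball_zero_iff, not_lt]
      rcases Nat.eq_zero_or_pos (Nat.find hex) with hk | hk
      · rw [hk]
        simpa using (norm_nonneg z)
      · have hmin := Nat.find_min hex (Nat.sub_lt hk one_pos)
        push_neg at hmin
        have heq : Nat.find hex - 1 + 1 = Nat.find hex := Nat.succ_pred_eq_of_pos hk
        rw [heq] at hmin
        linarith
  set q : ℝ := (1 / 2 : ℝ) ^ (1 - t) with hq
  have hq0 : 0 ≤ q := Real.rpow_nonneg (by norm_num) _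
  have hq1 : q < 1 := Real.rpow_lt_one (by norm_num) (by norm_num) (by linarith)
  have hbound : ∀ k : ℕ, ∫⁻ z in A k, ENNReal.ofReal ((1 - ‖z‖) ^ (-t)) ∂volume
      ≤ ENNReal.ofReal (n : ℝ) * V * ENNReal.ofReal q ^ (k + 1) := by
    intro k
    set x : ℝ := (1 / 2 : ℝ) ^ (k + 1) with hx
    have hx0 : 0 < x := by positivity
    have hstep1 : ∫⁻ z in A k, ENNReal.ofReal ((1 - ‖z‖) ^ (-t)) ∂volume
        ≤ ENNReal.ofReal (x ^ (-t)) * volume (A k) := by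
      rw [← setLIntegral_const (A k) (ENNReal.ofReal (x ^ (-t)))]
      refine setLIntegral_mono measurable_const ?_
      intro z hz
      have h1 : ‖z‖ < 1 - x := by
        have := hz.1
        rwa [mem_ball_zero_iff] at this
      exact ENNReal.ofReal_le_ofReal
        (Real.rpow_le_rpow_of_nonpos hx0 (by linarith) (by linarith))
    have hvol : volume (A k) ≤ ENNReal.ofReal ((n : ℝ) * x) * V := by
      have hsub : A k ⊆ closedBall (0 : Pt n) (1 - x) \ ball 0 (1 - (1 / 2 : ℝ) ^ k) :=
        diff_subset_diff_left ball_subset_closedBall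
      refine (measure_mono hsub).trans ?_
      have h2 : (1 - x) - (1 - (1 / 2 : ℝ) ^ k) = x := by
        rw [hx]; ring
      have h3 : (1 / 2 : ℝ) ^ k ≤ 1 := pow_le_one₀ (by norm_num) (by norm_num)
      have := annulus_volume_le hn (n := n) (a := 1 - x) (b := 1 - (1 / 2 : ℝ) ^ k)
        (by linarith) (by rw [hx]; nlinarith [pow_nonneg (by norm_num : (0:ℝ) ≤ 1/2) k])
        (by linarith)
      rwa [h2] at this
    have hxq : x ^ (-t) * ((n : ℝ) * x) = (n : ℝ) * q ^ (k + 1) := by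
      have h4 : x ^ (-t) * x = x ^ (1 - t) := by
        nth_rewrite 2 [← Real.rpow_one x]
        rw [← Real.rpow_add hx0]
        ring_nf
      have h5 : x ^ (1 - t) = q ^ (k + 1) := by
        rw [hx, hq, ← Real.rpow_natCast ((1:ℝ)/2) (k + 1), ← Real.rpow_mul (by norm_num),
          mul_comm, Real.rpow_mul (by norm_num), Real.rpow_natCast]
      calc x ^ (-t) * ((n : ℝ) * x) = (n : ℝ) * (x ^ (-t) * x) := by ring
        _ = (n : ℝ) * q ^ (k + 1) := by rw [h4, h5]
    calc ∫⁻ z in A k, ENNReal.ofReal ((1 - ‖z‖) ^ (-t)) ∂volume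
        ≤ ENNReal.ofReal (x ^ (-t)) * (ENNReal.ofReal ((n : ℝ) * x) * V) := by
          refine hstep1.trans ?_
          exact mul_le_mul_right hvol _
      _ = ENNReal.ofReal (x ^ (-t) * ((n : ℝ) * x)) * V := by
          rw [← mul_assoc, ← ENNReal.ofReal_mul (Real.rpow_nonneg hx0.le _)]
      _ = ENNReal.ofReal ((n : ℝ) * q ^ (k + 1)) * V := by rw [hxq]
      _ = ENNReal.ofReal (n : ℝ) * V * ENNReal.ofReal q ^ (k + 1) := by
          rw [ENNReal.ofReal_mul (by positivity), ENNReal.ofReal_pow hq0]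
          ring
  calc ∫⁻ z in ball (0 : Pt n) 1, ENNReal.ofReal ((1 - ‖z‖) ^ (-t))
      ≤ ∫⁻ z in ⋃ k, A k, ENNReal.ofReal ((1 - ‖z‖) ^ (-t)) := lintegral_mono_set hcover
    _ ≤ ∑' k, ∫⁻ z in A k, ENNReal.ofReal ((1 - ‖z‖) ^ (-t)) ∂volume :=
        lintegral_iUnion_le _ _
    _ ≤ ∑' k : ℕ, ENNReal.ofReal (n : ℝ) * V * ENNReal.ofReal q ^ (k + 1) :=
        ENNReal.tsum_le_tsum hbound
    _ = ENNReal.ofReal (n : ℝ) * V *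
        (ENNReal.ofReal q * (1 - ENNReal.ofReal q)⁻¹) := by
        rw [ENNReal.tsum_mul_left, ENNReal.tsum_geometric_add_one]
    _ < ⊤ := by
        refine ENNReal.mul_lt_top (ENNReal.mul_lt_top ENNReal.ofReal_lt_top
          hVlt.lt_top) (ENNReal.mul_lt_top ENNReal.ofReal_lt_top ?_)
        rw [ENNReal.inv_lt_top]
        rw [tsub_pos_iff_lt]
        exact ENNReal.ofReal_lt_one.2 hq1

end Aux

/-- **If `E ⊆ 𝔻ⁿ` is separated then `δ(E) ≤ n − 1`; equivalently `S_E(s) < ∞` for all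
`s > n − 1`.** -/
theorem critExp_le_of_separated {n : ℕ} (hn : 1 ≤ n)
    (E : Set (Pt n)) (hE : E ⊆ ball 0 1) (hdisc : IsDiscreteSet E)
    (hsep : SeparatedSet E) :
    critExp E ≤ ((n - 1 : ℕ) : ℝ≥0∞) ∧
      ∀ s : ℝ, (n : ℝ) - 1 < s → accSeries E s < ⊤ := by
  classical
  obtain ⟨c₁, hc₁0, hc₁1, hc₁⟩ := hsep
  haveI := euclidean_nontrivial hn
  set r : Pt n → ℝ := fun x => c₁ * (1 - ‖x‖) / 2 with hrdef
  have hxlt : ∀ x ∈ E, ‖x‖ < 1 := fun x hx => mem_ball_zero_iff.1 (hE hx)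
  have hrpos : ∀ x ∈ E, 0 < r x := by
    intro x hx
    have := hxlt x hx
    simp only [hrdef]
    nlinarith
  have hdist : ∀ x ∈ E, ∀ y ∈ E, x ≠ y → c₁ * (1 - ‖x‖) < dist x y := by
    intro x hx y hy hxy
    by_contra h
    push_neg at h
    have hmem : y ∈ closedBall x (c₁ * (1 - ‖x‖)) ∩ E :=
      ⟨mem_closedBall.2 (by rwa [dist_comm]), hy⟩
    rw [hc₁ x hx] at hmem
    exact hxy (mem_singleton_iff.1 hmem).symm
  have hdisj : E.PairwiseDisjoint fun x => ball x (r x) := by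
    intro x hx y hy hxy
    apply ball_disjoint_ball
    have h1 := hdist x hx y hy hxy
    have h2 := hdist y hy x hx hxy.symm
    rw [dist_comm y x] at h2
    simp only [hrdef]
    linarith
  have hEc : E.Countable :=
    hdisj.countable_of_isOpen (fun x _ => isOpen_ball)
      (fun x hx => nonempty_ball.2 (hrpos x hx))
  haveI := hEc.to_subtype
  have hBsub : ∀ x ∈ E, ball x (r x) ⊆ ball (0 : Pt n) 1 := by
    intro x hx z hz
    rw [mem_ball] at hz
    have h1 : ‖z‖ ≤ ‖x‖ + dist z x := by
      rw [dist_eq_norm]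
      calc ‖z‖ = ‖x + (z - x)‖ := by rw [add_sub_cancel]
        _ ≤ ‖x‖ + ‖z - x‖ := norm_add_le _ _
    have hx1 := hxlt x hx
    rw [mem_ball_zero_iff]
    have : r x ≤ (1 - ‖x‖) / 2 := by
      simp only [hrdef]
      nlinarith
    linarith
  -- the key finiteness estimate for `n - 1 < s < n`
  have key : ∀ s : ℝ, (n : ℝ) - 1 < s → s < n → accSeries E s < ⊤ := by
    intro s hs1 hs2
    set t : ℝ := (n : ℝ) - s with ht
    have ht0 : 0 < t := by simp only [ht]; linarith
    have ht1 : t < 1 := by simp only [ht]; linarith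
    set g : Pt n → ℝ≥0∞ := fun z => ENNReal.ofReal ((1 - ‖z‖) ^ (-t)) with hg
    have hgm : Measurable g := by
      apply ENNReal.measurable_ofReal.comp
      exact (measurable_const.sub measurable_norm).pow_const (-t)
    set V := volume (ball (0 : Pt n) 1) with hV
    have hV0 : V ≠ 0 := (measure_ball_pos volume 0 one_pos).ne'
    have hVt : V ≠ ⊤ := measure_ball_lt_top.ne
    set a : ℝ≥0∞ := ENNReal.ofReal ((2 : ℝ) ^ (-t) * (c₁ / 2) ^ n) * V with ha
    have ha0 : a ≠ 0 := by
      refine mul_ne_zero ?_ hV0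
      simp only [ne_eq, ENNReal.ofReal_eq_zero, not_le]
      have h2t : (0:ℝ) < (2:ℝ) ^ (-t) := Real.rpow_pos_of_pos (by norm_num) _
      have hcn : (0:ℝ) < (c₁ / 2) ^ n := pow_pos (by linarith) n
      positivity
    have hat : a ≠ ⊤ := ENNReal.mul_ne_top ENNReal.ofReal_ne_top hVt
    have hpoint : ∀ x : E, a * ENNReal.ofReal ((1 - ‖(x : Pt n)‖) ^ s)
        ≤ ∫⁻ z in ball (x : Pt n) (r x), g z ∂volume := by
      rintro ⟨x, hx⟩
      simp only
      set d : ℝ := 1 - ‖x‖ with hd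
      have hd0 : 0 < d := by simp only [hd]; linarith [hxlt x hx]
      have hub : ∀ z ∈ ball x (r x), 1 - ‖z‖ ≤ 2 * d := by
        intro z hz
        rw [mem_ball] at hz
        have h1 : ‖x‖ - ‖z‖ ≤ dist z x := by
          rw [dist_eq_norm, norm_sub_rev]
          exact (le_abs_self _).trans (abs_norm_sub_norm_le x z)
        have h2 : r x ≤ d := by
          simp only [hrdef, hd]
          nlinarith
        simp only [hd] at *
        linarith
      have hlow : ∀ z ∈ ball x (r x), ENNReal.ofReal ((2 * d) ^ (-t)) ≤ g z := by
        intro z hz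
        have h2 := hub z hz
        have hz1 : ‖z‖ < 1 := mem_ball_zero_iff.1 (hBsub x hx hz)
        exact ENNReal.ofReal_le_ofReal
          (Real.rpow_le_rpow_of_nonpos (by linarith) h2 (by linarith))
      have hint : ENNReal.ofReal ((2 * d) ^ (-t)) * volume (ball x (r x))
          ≤ ∫⁻ z in ball x (r x), g z ∂volume := by
        rw [← setLIntegral_const (ball x (r x)) (ENNReal.ofReal ((2 * d) ^ (-t)))]
        exact setLIntegral_mono hgm hlow
      refine le_trans (le_of_eq ?_) hint
      rw [Measure.addHaar_ball volume x (hrpos x hx).le, finrank_euclideanSpace_fin,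
        ← hV, ha]
      have hreal : (2 : ℝ) ^ (-t) * (c₁ / 2) ^ n * d ^ s = (2 * d) ^ (-t) * r x ^ n := by
        have e1 : (2 * d) ^ (-t) = (2 : ℝ) ^ (-t) * d ^ (-t) :=
          Real.mul_rpow (by norm_num) hd0.le
        have e2 : r x ^ n = (c₁ / 2) ^ n * d ^ n := by
          simp only [hrdef, hd]
          rw [← mul_pow]
          ring_nf
        have e3 : d ^ (-t) * (d : ℝ) ^ n = d ^ s := by
          rw [← Real.rpow_natCast d n, ← Real.rpow_add hd0]
          congr 1
          simp only [ht]
          ring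
        rw [e1, e2, ← e3]
        ring
      calc ENNReal.ofReal ((2:ℝ) ^ (-t) * (c₁ / 2) ^ n) * V * ENNReal.ofReal (d ^ s)
          = ENNReal.ofReal ((2:ℝ) ^ (-t) * (c₁ / 2) ^ n * d ^ s) * V := by
            rw [ENNReal.ofReal_mul
              (mul_nonneg (Real.rpow_nonneg (by norm_num) _) (pow_nonneg (by linarith) n))]
            ring
        _ = ENNReal.ofReal ((2 * d) ^ (-t) * r x ^ n) * V := by rw [hreal]
        _ = ENNReal.ofReal ((2 * d) ^ (-t)) * (ENNReal.ofReal (r x ^ n) * V) := by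
            rw [ENNReal.ofReal_mul (Real.rpow_nonneg (by linarith) _)]
            ring
    have hdisj' : Pairwise (Function.onFun Disjoint fun x : E => ball (x : Pt n) (r x)) :=
      fun x y hxy => hdisj x.2 y.2 (fun h => hxy (Subtype.ext h))
    have hsum : a * accSeries E s ≤ ∫⁻ z in ball (0 : Pt n) 1, g z ∂volume := by
      rw [accSeries, ← ENNReal.tsum_mul_left]
      calc ∑' x : E, a * ENNReal.ofReal ((1 - ‖(x : Pt n)‖) ^ s)
          ≤ ∑' x : E, ∫⁻ z in ball (x : Pt n) (r x), g z ∂volume :=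
            ENNReal.tsum_le_tsum hpoint
        _ = ∫⁻ z in ⋃ x : E, ball (x : Pt n) (r x), g z ∂volume :=
            (lintegral_iUnion (fun _ => measurableSet_ball) hdisj' g).symm
        _ ≤ ∫⁻ z in ball (0 : Pt n) 1, g z ∂volume := by
            refine lintegral_mono_set ?_
            exact iUnion_subset fun x => hBsub x.1 x.2
    have hfin : a * accSeries E s < ⊤ :=
      lt_of_le_of_lt hsum (lintegral_rim_fin hn ht0 ht1)
    by_contra hcon
    push_neg at hcon
    rw [top_le_iff.1 hcon, ENNReal.mul_top ha0] at hfin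
    exact (lt_irrefl _ hfin)
  -- monotonicity in the exponent
  have mono : ∀ s s' : ℝ, s' ≤ s → accSeries E s ≤ accSeries E s' := by
    intro s s' hss
    refine ENNReal.tsum_le_tsum fun x => ?_
    refine ENNReal.ofReal_le_ofReal ?_
    exact Real.rpow_le_rpow_of_exponent_ge (by linarith [hxlt x.1 x.2])
      (by linarith [norm_nonneg (x : Pt n)]) hss
  have hfin : ∀ s : ℝ, (n : ℝ) - 1 < s → accSeries E s < ⊤ := by
    intro s hs
    have hn1 : (1 : ℝ) ≤ (n : ℝ) := by exact_mod_cast hn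
    set s₀ : ℝ := min s ((n : ℝ) - 1 / 2) with hs₀
    have h1 : (n : ℝ) - 1 < s₀ := lt_min hs (by linarith)
    have h2 : s₀ < n := lt_of_le_of_lt (min_le_right _ _) (by linarith)
    exact lt_of_le_of_lt (mono s s₀ (min_le_left _ _)) (key s₀ h1 h2)
  refine ⟨?_, hfin⟩
  have hcast : ((n - 1 : ℕ) : ℝ) = (n : ℝ) - 1 := by
    rw [Nat.cast_sub hn, Nat.cast_one]
  apply ENNReal.le_of_forall_pos_le_add
  intro ε hε _
  have hfin' : accSeries E ((((n - 1 : ℕ) : ℝ≥0) + ε : ℝ≥0) : ℝ) < ⊤ := by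
    apply hfin
    have h1 : ((((n - 1 : ℕ) : ℝ≥0) + ε : ℝ≥0) : ℝ) = ((n : ℝ) - 1) + (ε : ℝ) := by
      rw [NNReal.coe_add, NNReal.coe_natCast, hcast]
    rw [h1]
    have : (0 : ℝ) < ε := hε
    linarith
  have hle : critExp E ≤ ((((n - 1 : ℕ) : ℝ≥0) + ε : ℝ≥0) : ℝ≥0∞) := by
    unfold critExp
    exact iInf₂_le (((n - 1 : ℕ) : ℝ≥0) + ε) hfin'
  refine hle.trans (le_of_eq ?_)
  rw [ENNReal.coe_add, ENNReal.coe_natCast]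

end
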